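/- arXiv:2602.06206 — 2 statements merged into one kernel-verified Lean document; each statement's English description precedes it below -/
import Mathlib

section
/- With ε(γ) the piecewise-linear approximation (slope -χ on (ρ_L,ρ_H)) and X a Gamma random variable with integer shape m_1 and rate ϑ_1 > 0 (so CDF F(x) = 1 - e^{-x ϑ_1} ∑_{j=0}^{m_1-1}(xϑ_1)^j/j!), the average E[ε(X)] equals χ[(ρ_H - ρ_L) - (1/ϑ_1) ∑_{j=0}^{m_1-1}( e^{-ρ_L ϑ_1} ∑_{l=0}^{j} (ρ_L ϑ_1)^l/l! - e^{-ρ_H ϑ_1} ∑_{l=0}^{j} (ρ_H ϑ_1)^l/l! )]. -/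
open MeasureTheory Finset Nat

/-- Piecewise-linear approximation of the instantaneous BLER. -/
noncomputable def blerApprox (χ τ : ℝ) (γ : ℝ) : ℝ :=
  if γ ≤ τ - 1 / (2 * χ) then 1
  else if γ ≥ τ + 1 / (2 * χ) then 0
  else 1 / 2 - χ * (γ - τ)

/-- Derivative of one term of the incomplete-gamma sum. -/
lemma term_deriv (ϑ : ℝ) (j : ℕ) (x : ℝ) :
    HasDerivAt (fun x : ℝ => Real.exp (-x*ϑ) * ∑ l ∈ Finset.range (j+1), (x*ϑ)^l / (l ! : ℝ))
      (-(ϑ * (Real.exp (-x*ϑ) * ((x*ϑ)^j / (j ! : ℝ))))) x := by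
  have hexp : HasDerivAt (fun x : ℝ => Real.exp (-x*ϑ)) (-ϑ * Real.exp (-x*ϑ)) x := by
    have h1 : HasDerivAt (fun x : ℝ => -x*ϑ) (-ϑ) x := by
      simpa using ((hasDerivAt_id x).neg.mul_const ϑ)
    simpa [mul_comm, Function.comp_def] using (Real.hasDerivAt_exp (-x*ϑ)).comp x h1
  have hsum : HasDerivAt (fun x : ℝ => ∑ l ∈ Finset.range (j+1), (x*ϑ)^l / (l ! : ℝ))
      (ϑ * ∑ l ∈ Finset.range j, (x*ϑ)^l / (l ! : ℝ)) x := by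
    have h : ∀ l ∈ Finset.range (j+1),
        HasDerivAt (fun x : ℝ => (x*ϑ)^l / (l ! : ℝ))
          ((l * (x*ϑ)^(l-1) * ϑ) / (l ! : ℝ)) x := by
      intro l _
      simpa using (((hasDerivAt_id x).mul_const ϑ).pow l).div_const ((l ! : ℝ))
    have := HasDerivAt.fun_sum h
    refine this.congr_deriv ?_
    symm
    rw [Finset.sum_range_succ']
    simp only [Nat.cast_zero, zero_mul, Nat.factorial_zero, Nat.cast_one, zero_div, add_zero]
    rw [Finset.mul_sum]
    refine Finset.sum_congr rfl fun l _ => ?_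
    have hfact : ((l+1)! : ℝ) = (l+1) * (l ! : ℝ) := by
      rw [Nat.factorial_succ]; push_cast; ring
    have hl : ((l : ℝ) + 1) ≠ 0 := by positivity
    have hf : ((l ! : ℝ)) ≠ 0 := by positivity
    field_simp [hfact]
    rw [show l + 1 - 1 = l by omega, hfact]; push_cast; ring
  have := hexp.fun_mul hsum
  refine this.congr_deriv ?_
  symm
  have : (x*ϑ)^j / (j ! : ℝ) =
      (∑ l ∈ Finset.range (j+1), (x*ϑ)^l / (l ! : ℝ)) - ∑ l ∈ Finset.range j, (x*ϑ)^l / (l ! : ℝ) := by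
    rw [Finset.sum_range_succ]; ring
  rw [this]
  ring

/-- Antiderivative of the Gamma CDF. -/
noncomputable def Haux (ϑ : ℝ) (m : ℕ) (x : ℝ) : ℝ :=
  x + (1/ϑ) * ∑ j ∈ Finset.range m,
    Real.exp (-x*ϑ) * ∑ l ∈ Finset.range (j+1), (x*ϑ)^l / (l ! : ℝ)

/-- The Gamma CDF (for nonnegative arguments). -/
noncomputable def phiaux (ϑ : ℝ) (m : ℕ) (x : ℝ) : ℝ :=
  1 - Real.exp (-x*ϑ) * ∑ j ∈ Finset.range m, (x*ϑ)^j / (j ! : ℝ)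

lemma Haux_deriv (ϑ : ℝ) (hϑ : ϑ ≠ 0) (m : ℕ) (x : ℝ) :
    HasDerivAt (Haux ϑ m) (phiaux ϑ m x) x := by
  have h1 : HasDerivAt (fun x : ℝ => ∑ j ∈ Finset.range m,
      Real.exp (-x*ϑ) * ∑ l ∈ Finset.range (j+1), (x*ϑ)^l / (l ! : ℝ))
      (∑ j ∈ Finset.range m, -(ϑ * (Real.exp (-x*ϑ) * ((x*ϑ)^j / (j ! : ℝ))))) x :=
    HasDerivAt.fun_sum fun j _ => term_deriv ϑ j x
  have h2 := (hasDerivAt_id x).add (h1.const_mul (1/ϑ))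
  refine h2.congr_deriv ?_
  symm
  rw [phiaux, Finset.mul_sum, Finset.mul_sum]
  have : ∀ j ∈ Finset.range m,
      Real.exp (-x*ϑ) * ((x*ϑ)^j / (j ! : ℝ)) =
      -(1/ϑ * -(ϑ * (Real.exp (-x*ϑ) * ((x*ϑ)^j / (j ! : ℝ))))) := by
    intro j _
    field_simp
  rw [Finset.sum_congr rfl this, Finset.sum_neg_distrib]
  ring

lemma phiaux_cont (ϑ : ℝ) (m : ℕ) : Continuous (phiaux ϑ m) := by
  unfold phiaux
  fun_prop

/-- The piecewise-linear BLER as an integral of an indicator. -/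
lemma clamp_integral (χ τ : ℝ) (hχ : 0 < χ) (γ : ℝ) :
    blerApprox χ τ γ = ∫ t in Set.Ioc (0:ℝ) 1, (if γ ≤ τ + (1/2 - t)/χ then (1:ℝ) else 0) := by
  set c : ℝ := 1/2 - χ * (γ - τ) with hc
  have hhalf : χ * (1 / (2 * χ)) = 1/2 := by field_simp
  have hcond : ∀ t : ℝ, (γ ≤ τ + (1/2 - t)/χ) ↔ t ≤ c := by
    intro t
    rw [hc]
    constructor <;> intro h
    · have h2 : γ - τ ≤ (1/2 - t)/χ := by linarith
      have h3 : χ * (γ - τ) ≤ 1/2 - t := (le_div_iff₀' hχ).mp h2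
      linarith
    · have h2 : χ * (γ - τ) ≤ 1/2 - t := by linarith
      have h3 : γ - τ ≤ (1/2 - t)/χ := (le_div_iff₀' hχ).mpr h2
      linarith
  have h1 : (fun t : ℝ => if γ ≤ τ + (1/2 - t)/χ then (1:ℝ) else 0)
      = (Set.Iic c).indicator (fun _ => (1:ℝ)) := by
    funext t
    simp only [Set.indicator, Set.mem_Iic, hcond t]
  rw [h1, MeasureTheory.setIntegral_indicator measurableSet_Iic, Set.Ioc_inter_Iic,
    MeasureTheory.setIntegral_const, Real.volume_real_Ioc, smul_eq_mul, mul_one]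
  rw [blerApprox]
  split_ifs with h1' h2'
  · have e1 : γ - τ ≤ -(1/(2*χ)) := by linarith
    have e2 : χ*(γ-τ) ≤ χ*(-(1/(2*χ))) := mul_le_mul_of_nonneg_left e1 hχ.le
    have e3 : χ*(-(1/(2*χ))) = -(1/2) := by rw [mul_neg, hhalf]
    have hc1 : (1:ℝ) ≤ c := by rw [hc]; linarith
    rw [min_eq_left hc1, sub_zero]
    norm_num
  · have e1 : (1/(2*χ)) ≤ γ - τ := by linarith
    have e2 : χ*(1/(2*χ)) ≤ χ*(γ-τ) := mul_le_mul_of_nonneg_left e1 hχ.le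
    have hc0 : c ≤ 0 := by rw [hc]; linarith
    rw [min_eq_right (by linarith : c ≤ 1), sub_zero, sup_eq_right.mpr hc0]
  · push_neg at h1' h2'
    have e1 : χ*(γ-τ) < χ*(1/(2*χ)) := mul_lt_mul_of_pos_left (by linarith) hχ
    have e2 : χ*(-(1/(2*χ))) < χ*(γ-τ) := mul_lt_mul_of_pos_left (by linarith) hχ
    have e3 : χ*(-(1/(2*χ))) = -(1/2) := by rw [mul_neg, hhalf]
    have hc1 : c < 1 := by rw [hc]; linarith
    have hc0 : 0 < c := by rw [hc]; linarith
    rw [min_eq_right hc1.le, sub_zero, sup_eq_left.mpr hc0.le]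

/-- closed-form first-hop average BLER for a Gamma-distributed SNR. -/
theorem avg_bler_gamma_closed_form
    {Ω : Type*} [MeasurableSpace Ω] (ℙ : Measure Ω) [IsProbabilityMeasure ℙ]
    (X : Ω → ℝ) (hX : Measurable X) (hXnonneg : ∀ ω, 0 ≤ X ω)
    (χ τ : ℝ) (hχ : 0 < χ) (hτ : 1 / (2 * χ) < τ)
    (m₁ : ℕ) (hm₁ : 1 ≤ m₁) (ϑ₁ : ℝ) (hϑ₁ : 0 < ϑ₁)
    (hcdf : ∀ x : ℝ, 0 ≤ x → (ℙ {ω | X ω ≤ x}).toReal =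
      1 - Real.exp (-x * ϑ₁) * ∑ j ∈ Finset.range m₁, (x * ϑ₁) ^ j / (j ! : ℝ)) :
    ∫ ω, blerApprox χ τ (X ω) ∂ℙ =
      χ * (((τ + 1 / (2 * χ)) - (τ - 1 / (2 * χ))) -
        (1 / ϑ₁) * ∑ j ∈ Finset.range m₁,
          (Real.exp (-(τ - 1 / (2 * χ)) * ϑ₁) *
              ∑ l ∈ Finset.range (j + 1), ((τ - 1 / (2 * χ)) * ϑ₁) ^ l / (l ! : ℝ) -
            Real.exp (-(τ + 1 / (2 * χ)) * ϑ₁) *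
              ∑ l ∈ Finset.range (j + 1), ((τ + 1 / (2 * χ)) * ϑ₁) ^ l / (l ! : ℝ))) := by
  haveI : IsFiniteMeasure (volume.restrict (Set.Ioc (0:ℝ) 1)) :=
    ⟨by rw [Measure.restrict_apply_univ, Real.volume_Ioc]; exact ENNReal.ofReal_lt_top⟩
  set S : Set (Ω × ℝ) := {p : Ω × ℝ | X p.1 ≤ τ + (1/2 - p.2)/χ} with hSdef
  have hS : MeasurableSet S := by
    apply measurableSet_le (hX.comp measurable_fst)
    fun_prop
  have hint : Integrable
      (Function.uncurry fun ω t => if X ω ≤ τ + (1/2 - t)/χ then (1:ℝ) else 0)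
      (ℙ.prod (volume.restrict (Set.Ioc (0:ℝ) 1))) := by
    have heq : (Function.uncurry fun ω t => if X ω ≤ τ + (1/2 - t)/χ then (1:ℝ) else 0)
        = S.indicator (fun _ => (1:ℝ)) := by
      funext p
      simp [Function.uncurry, Set.indicator, hSdef]
    rw [heq, integrable_indicator_iff hS]
    exact integrableOn_const (measure_lt_top _ _).ne
  have step1 : ∫ ω, blerApprox χ τ (X ω) ∂ℙ
      = ∫ t in Set.Ioc (0:ℝ) 1,
          ∫ ω, (if X ω ≤ τ + (1/2 - t)/χ then (1:ℝ) else 0) ∂ℙ := by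
    simp_rw [clamp_integral χ τ hχ]
    exact MeasureTheory.integral_integral_swap hint
  have step3 : ∫ t in Set.Ioc (0:ℝ) 1,
        ∫ ω, (if X ω ≤ τ + (1/2 - t)/χ then (1:ℝ) else 0) ∂ℙ
      = ∫ t in Set.Ioc (0:ℝ) 1, phiaux ϑ₁ m₁ (τ + (1/2 - t)/χ) := by
    refine MeasureTheory.setIntegral_congr_fun measurableSet_Ioc fun t ht => ?_
    have hc0 : (0:ℝ) ≤ τ + (1/2 - t)/χ := by
      have h1 : -(1/2) ≤ 1/2 - t := by linarith [ht.2]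
      have h2 : (-(1/2))/χ ≤ (1/2 - t)/χ := div_le_div_of_nonneg_right ?_ hχ.le
      · have h3 : (-(1/2))/χ = -(1/(2*χ)) := by ring
        rw [h3] at h2
        linarith
      · exact h1
    have hrew : (fun ω => if X ω ≤ τ + (1/2 - t)/χ then (1:ℝ) else 0)
        = Set.indicator {ω | X ω ≤ τ + (1/2 - t)/χ} (fun _ => (1:ℝ)) := by
      funext ω; simp [Set.indicator]
    have hms : MeasurableSet {ω | X ω ≤ τ + (1/2 - t)/χ} := hX measurableSet_Iic
    rw [hrew, MeasureTheory.integral_indicator_const (1:ℝ) hms,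
      smul_eq_mul, mul_one, measureReal_def, hcdf _ hc0, phiaux]
  have hK : ∀ t : ℝ, HasDerivAt (fun t : ℝ => -χ * Haux ϑ₁ m₁ (τ + (1/2 - t)/χ))
      (phiaux ϑ₁ m₁ (τ + (1/2 - t)/χ)) t := by
    intro t
    have hg : HasDerivAt (fun t : ℝ => τ + (1/2 - t)/χ) ((-1)/χ) t := by
      have h1 : HasDerivAt (fun t : ℝ => (1/2 - t : ℝ)) (-1) t := by
        simpa using (hasDerivAt_id t).const_sub (1/2 : ℝ)
      exact (h1.div_const χ).const_add τ
    have := ((Haux_deriv ϑ₁ hϑ₁.ne' m₁ _).comp t hg).const_mul (-χ)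
    refine this.congr_deriv ?_
    symm
    field_simp
  have cont : Continuous fun t : ℝ => phiaux ϑ₁ m₁ (τ + (1/2 - t)/χ) :=
    (phiaux_cont _ _).comp (by fun_prop)
  have step4 : ∫ t in (0:ℝ)..1, phiaux ϑ₁ m₁ (τ + (1/2 - t)/χ)
      = (-χ * Haux ϑ₁ m₁ (τ + (1/2 - 1)/χ)) - (-χ * Haux ϑ₁ m₁ (τ + (1/2 - 0)/χ)) :=
    intervalIntegral.integral_eq_sub_of_hasDerivAt (fun t _ => hK t)
      (cont.intervalIntegrable 0 1)
  have ea : τ + ((1:ℝ)/2 - 1)/χ = τ - 1/(2*χ) := by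
    field_simp
    ring
  have eb : τ + ((1:ℝ)/2 - 0)/χ = τ + 1/(2*χ) := by
    field_simp
    ring
  rw [step1, step3, ← intervalIntegral.integral_of_le (by norm_num : (0:ℝ) ≤ 1), step4, ea, eb]
  simp only [Haux]
  rw [Finset.sum_sub_distrib]
  ring
end

section
/- Fix integer m ≥ 1, N ≥ 1, λ_n > 0, χ > 0, and 0 < ρ_L < ρ_H. Define the exact average BLER ε̄(ϑ) = χ ∫_{ρ_L}^{ρ_H} ∏_{n=1}^N [γ(m, xϑ/λ_n)/Γ(m)] dx and the asymptote A(ϑ) = χ (ρ_H^{mN+1} − ρ_L^{mN+1})/(mN+1) · (ϑ^m/m!)^N ∏_n λ_n^{−m}. Then ε̄(ϑ)/A(ϑ) → 1 as ϑ → 0⁺. -/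
open Real Filter Finset Nat

/-- Lower incomplete gamma function for integer shape. -/
noncomputable def lowerIncGamma (s : ℕ) (z : ℝ) : ℝ :=
  ∫ t in (0:ℝ)..z, t ^ (s - 1) * Real.exp (-t)

lemma lig_continuous (m : ℕ) : Continuous (lowerIncGamma m) :=
  intervalIntegral.continuous_primitive
    (fun a b => Continuous.intervalIntegrable (by continuity) a b) 0

lemma lig_le {m : ℕ} (hm : 1 ≤ m) {z : ℝ} (hz : 0 ≤ z) :
    lowerIncGamma m z ≤ z ^ m / m := by
  have h1 : lowerIncGamma m z ≤ ∫ t in (0:ℝ)..z, t ^ (m - 1) := by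
    apply intervalIntegral.integral_mono_on hz
      (Continuous.intervalIntegrable (by continuity) 0 z)
      (Continuous.intervalIntegrable (by continuity) 0 z)
    intro t ht
    have h2 : Real.exp (-t) ≤ 1 := by
      rw [Real.exp_le_one_iff]; linarith [ht.1]
    have h3 : (0:ℝ) ≤ t ^ (m - 1) := pow_nonneg ht.1 _
    nlinarith [Real.exp_pos (-t)]
  have h2 : ∫ t in (0:ℝ)..z, t ^ (m - 1) = z ^ m / m := by
    rw [integral_pow, Nat.sub_add_cancel hm, zero_pow (by omega : m ≠ 0)]
    norm_num
    rw [Nat.cast_sub hm]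
    push_cast
    ring_nf
  linarith [h1, h2.symm.le]

lemma lig_ge {m : ℕ} (hm : 1 ≤ m) {z : ℝ} (hz : 0 ≤ z) :
    Real.exp (-z) * (z ^ m / m) ≤ lowerIncGamma m z := by
  have h1 : (∫ t in (0:ℝ)..z, Real.exp (-z) * t ^ (m - 1)) ≤ lowerIncGamma m z := by
    apply intervalIntegral.integral_mono_on hz
      (Continuous.intervalIntegrable (by continuity) 0 z)
      (Continuous.intervalIntegrable (by continuity) 0 z)
    intro t ht
    have h2 : Real.exp (-z) ≤ Real.exp (-t) := Real.exp_le_exp.mpr (by linarith [ht.2])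
    have h3 : (0:ℝ) ≤ t ^ (m - 1) := pow_nonneg ht.1 _
    nlinarith
  have h2 : (∫ t in (0:ℝ)..z, Real.exp (-z) * t ^ (m - 1))
      = Real.exp (-z) * (z ^ m / m) := by
    rw [intervalIntegral.integral_const_mul, integral_pow, Nat.sub_add_cancel hm,
      zero_pow (by omega : m ≠ 0)]
    congr 1
    rw [Nat.cast_sub hm]
    push_cast
    ring_nf
  linarith [h2.symm.le]

lemma fac_eq {m : ℕ} (hm : 1 ≤ m) : (m ! : ℝ) = (m : ℝ) * ((m - 1)! : ℝ) := by
  rw [← Nat.mul_factorial_pred (by omega)]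
  push_cast
  ring

lemma lig_div_le {m : ℕ} (hm : 1 ≤ m) {z : ℝ} (hz : 0 ≤ z) :
    lowerIncGamma m z / ((m - 1)! : ℝ) ≤ z ^ m / (m ! : ℝ) := by
  have hf : (0:ℝ) < ((m - 1)! : ℝ) := by exact_mod_cast Nat.factorial_pos _
  have hmpos : (0:ℝ) < (m : ℝ) := by exact_mod_cast hm
  rw [fac_eq hm]
  have h := lig_le hm hz
  rw [div_le_div_iff₀ hf (by positivity)]
  calc lowerIncGamma m z * ((m:ℝ) * ((m-1)! : ℝ))
      ≤ (z ^ m / m) * ((m:ℝ) * ((m-1)! : ℝ)) :=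
        mul_le_mul_of_nonneg_right h (by positivity)
    _ = z ^ m * ((m-1)! : ℝ) := by field_simp

lemma lig_div_ge {m : ℕ} (hm : 1 ≤ m) {z : ℝ} (hz : 0 ≤ z) :
    Real.exp (-z) * (z ^ m / (m ! : ℝ)) ≤ lowerIncGamma m z / ((m - 1)! : ℝ) := by
  have hf : (0:ℝ) < ((m - 1)! : ℝ) := by exact_mod_cast Nat.factorial_pos _
  have hmpos : (0:ℝ) < (m : ℝ) := by exact_mod_cast hm
  have h := lig_ge hm hz
  rw [fac_eq hm, le_div_iff₀ hf]
  calc Real.exp (-z) * (z ^ m / ((m:ℝ) * ((m-1)! : ℝ))) * ((m-1)! : ℝ)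
      = Real.exp (-z) * (z ^ m / m) := by field_simp
    _ ≤ lowerIncGamma m z := h

lemma lig_div_nonneg {m : ℕ} (hm : 1 ≤ m) {z : ℝ} (hz : 0 ≤ z) :
    0 ≤ lowerIncGamma m z / ((m - 1)! : ℝ) := by
  refine le_trans ?_ (lig_div_ge hm hz)
  positivity

/-- high-SNR asymptotics of the second-hop average BLER
(Theorem 1 of the paper): the exact average BLER is asymptotically equal to the
closed-form asymptote as ϑ → 0⁺. -/
theorem second_hop_bler_high_snr (N m : ℕ) (hN : 1 ≤ N) (hm : 1 ≤ m)
    (lam : Fin N → ℝ) (hlam : ∀ n, 0 < lam n)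
    (χ ρL ρH : ℝ) (hχ : 0 < χ) (hρL : 0 < ρL) (hρ : ρL < ρH) :
    Tendsto
      (fun ϑ : ℝ =>
        (χ * ∫ x in ρL..ρH, ∏ n, lowerIncGamma m (x * ϑ / lam n) / ((m - 1)! : ℝ)) /
          (χ * (ρH ^ (m * N + 1) - ρL ^ (m * N + 1)) / (m * N + 1) *
            (ϑ ^ m / (m ! : ℝ)) ^ N * ∏ n, (lam n)⁻¹ ^ m))
      (nhdsWithin 0 (Set.Ioi 0)) (nhds 1) := by
  have hρH : 0 < ρH := hρL.trans hρ
  set S : ℝ := ∑ n, (lam n)⁻¹ with hS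
  have hSnn : 0 ≤ S := Finset.sum_nonneg fun n _ => (inv_pos.mpr (hlam n)).le
  set k : ℕ := m * N with hk
  have hdiff : 0 < ρH ^ (k + 1) - ρL ^ (k + 1) := by
    have := pow_lt_pow_left₀ hρ hρL.le (n := k + 1) (by omega)
    linarith
  have key : ∀ ϑ : ℝ, ϑ ∈ Set.Ioi (0:ℝ) →
      Real.exp (-(ρH * ϑ * S)) ≤
        (χ * ∫ x in ρL..ρH, ∏ n, lowerIncGamma m (x * ϑ / lam n) / ((m - 1)! : ℝ)) /
          (χ * (ρH ^ (m * N + 1) - ρL ^ (m * N + 1)) / (m * N + 1) *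
            (ϑ ^ m / (m ! : ℝ)) ^ N * ∏ n, (lam n)⁻¹ ^ m) ∧
      (χ * ∫ x in ρL..ρH, ∏ n, lowerIncGamma m (x * ϑ / lam n) / ((m - 1)! : ℝ)) /
          (χ * (ρH ^ (m * N + 1) - ρL ^ (m * N + 1)) / (m * N + 1) *
            (ϑ ^ m / (m ! : ℝ)) ^ N * ∏ n, (lam n)⁻¹ ^ m) ≤ 1 := by
    intro ϑ hϑ
    rw [Set.mem_Ioi] at hϑ
    set C : ℝ := (ϑ ^ m / (m ! : ℝ)) ^ N * ∏ n, (lam n)⁻¹ ^ m with hC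
    have hCpos : 0 < C := by
      apply mul_pos (by positivity)
      exact Finset.prod_pos fun n _ => pow_pos (inv_pos.mpr (hlam n)) _
    set B : ℝ := (ρH ^ (k + 1) - ρL ^ (k + 1)) / ((k : ℝ) + 1) with hB
    have hBpos : 0 < B := div_pos hdiff (by positivity)
    -- the denominator equals χ * (B * C)
    have hdeq : χ * (ρH ^ (m * N + 1) - ρL ^ (m * N + 1)) / (m * N + 1) *
        (ϑ ^ m / (m ! : ℝ)) ^ N * ∏ n, (lam n)⁻¹ ^ m = χ * (B * C) := by
      rw [hB, hC, hk]
      push_cast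
      ring
    have hdenom : 0 < χ * (B * C) := mul_pos hχ (mul_pos hBpos hCpos)
    -- pointwise product identity
    have hprodeq : ∀ x : ℝ, ∏ n, ((x * ϑ / lam n) ^ m / (m ! : ℝ)) = x ^ k * C := by
      intro x
      have h1 : ∀ n : Fin N, (x * ϑ / lam n) ^ m / (m ! : ℝ)
          = ((x * ϑ) ^ m / (m ! : ℝ)) * ((lam n)⁻¹) ^ m := by
        intro n
        rw [div_pow, inv_pow]
        ring
      rw [Finset.prod_congr rfl fun n _ => h1 n, Finset.prod_mul_distrib,
        Finset.prod_const, Finset.card_univ, Fintype.card_fin, hC, hk]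
      rw [div_pow, div_pow, ← pow_mul, ← pow_mul, mul_pow]
      ring
    -- continuity of the integrand
    have hcont : Continuous fun x : ℝ =>
        ∏ n, lowerIncGamma m (x * ϑ / lam n) / ((m - 1)! : ℝ) := by
      apply continuous_finset_prod
      intro n _
      exact ((lig_continuous m).comp (by continuity)).div_const _
    -- pointwise upper bound
    have hptU : ∀ x ∈ Set.Icc ρL ρH,
        (∏ n, lowerIncGamma m (x * ϑ / lam n) / ((m - 1)! : ℝ)) ≤ x ^ k * C := by
      intro x hx
      have hx0 : (0:ℝ) ≤ x := hρL.le.trans hx.1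
      rw [← hprodeq x]
      apply Finset.prod_le_prod
      · intro n _
        exact lig_div_nonneg hm (div_nonneg (mul_nonneg hx0 hϑ.le) (hlam n).le)
      · intro n _
        exact lig_div_le hm (div_nonneg (mul_nonneg hx0 hϑ.le) (hlam n).le)
    -- pointwise lower bound
    have hptL : ∀ x ∈ Set.Icc ρL ρH,
        Real.exp (-(ρH * ϑ * S)) * (x ^ k * C) ≤
          ∏ n, lowerIncGamma m (x * ϑ / lam n) / ((m - 1)! : ℝ) := by
      intro x hx
      have hx0 : (0:ℝ) ≤ x := hρL.le.trans hx.1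
      have hprodL : ∏ n, (Real.exp (-(x * ϑ / lam n)) * ((x * ϑ / lam n) ^ m / (m ! : ℝ)))
          = Real.exp (-(x * ϑ * S)) * (x ^ k * C) := by
        rw [Finset.prod_mul_distrib, ← Real.exp_sum, hprodeq x]
        congr 2
        rw [hS, Finset.mul_sum, ← Finset.sum_neg_distrib]
        apply Finset.sum_congr rfl
        intro n _
        rw [div_eq_mul_inv]
      have step1 : Real.exp (-(ρH * ϑ * S)) * (x ^ k * C) ≤
          Real.exp (-(x * ϑ * S)) * (x ^ k * C) := by
        apply mul_le_mul_of_nonneg_right _ (by positivity)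
        apply Real.exp_le_exp.mpr
        apply neg_le_neg
        apply mul_le_mul_of_nonneg_right (mul_le_mul_of_nonneg_right hx.2 hϑ.le) hSnn
      refine step1.trans ?_
      rw [← hprodL]
      apply Finset.prod_le_prod
      · intro n _
        exact mul_nonneg (Real.exp_pos _).le
          (div_nonneg (pow_nonneg (div_nonneg (mul_nonneg hx0 hϑ.le) (hlam n).le) _)
            (by positivity))
      · intro n _
        exact lig_div_ge hm (div_nonneg (mul_nonneg hx0 hϑ.le) (hlam n).le)
    -- integral bounds
    have hIU : (∫ x in ρL..ρH, ∏ n, lowerIncGamma m (x * ϑ / lam n) / ((m - 1)! : ℝ))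
        ≤ B * C := by
      have h := intervalIntegral.integral_mono_on hρ.le
        (hcont.intervalIntegrable ρL ρH)
        (((continuous_pow k).mul continuous_const).intervalIntegrable (μ := MeasureTheory.volume) ρL ρH) hptU
      simp only [Pi.mul_apply] at h
      rwa [intervalIntegral.integral_mul_const, integral_pow] at h
    have hIL : Real.exp (-(ρH * ϑ * S)) * (B * C)
        ≤ ∫ x in ρL..ρH, ∏ n, lowerIncGamma m (x * ϑ / lam n) / ((m - 1)! : ℝ) := by
      have h := intervalIntegral.integral_mono_on hρ.le
        ((continuous_const.mul ((continuous_pow k).mul continuous_const)).intervalIntegrable (μ := MeasureTheory.volume) ρL ρH)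
        (hcont.intervalIntegrable ρL ρH) hptL
      simp only [Pi.mul_apply] at h
      rwa [intervalIntegral.integral_const_mul, intervalIntegral.integral_mul_const,
        integral_pow] at h
    constructor
    · rw [hdeq, le_div_iff₀ hdenom]
      calc Real.exp (-(ρH * ϑ * S)) * (χ * (B * C))
          = χ * (Real.exp (-(ρH * ϑ * S)) * (B * C)) := by ring
        _ ≤ χ * ∫ x in ρL..ρH, ∏ n, lowerIncGamma m (x * ϑ / lam n) / ((m - 1)! : ℝ) :=
            mul_le_mul_of_nonneg_left hIL hχ.le
    · rw [hdeq, div_le_one hdenom]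
      exact mul_le_mul_of_nonneg_left hIU hχ.le
  -- squeeze
  have hg : Tendsto (fun ϑ : ℝ => Real.exp (-(ρH * ϑ * S)))
      (nhdsWithin 0 (Set.Ioi 0)) (nhds 1) := by
    have hc : Continuous fun ϑ : ℝ => Real.exp (-(ρH * ϑ * S)) := by continuity
    have := hc.tendsto 0
    simp only [mul_zero, zero_mul, neg_zero, Real.exp_zero] at this
    exact this.mono_left nhdsWithin_le_nhds
  refine tendsto_of_tendsto_of_tendsto_of_le_of_le' hg tendsto_const_nhds ?_ ?_
  · exact eventually_nhdsWithin_of_forall fun ϑ hϑ => (key ϑ hϑ).1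
  · exact eventually_nhdsWithin_of_forall fun ϑ hϑ => (key ϑ hϑ).2
end
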